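/- Let $\Phi$ be a real symmetric $m\times m$ matrix possessing an eigenvector $u\in\{-1,+1\}^m$ whose eigenvalue $\lambda$ satisfies $|\lambda|=\|\Phi\|$ (operator norm). Then $\max_{\alpha,\beta\in\{\pm1\}^m}\alpha^T\Phi\beta = m\,\|\Phi\|$, and moreover for any unit vectors $a_1,\dots,a_m,b_1,\dots,b_m$ in any real inner product space, $\sum_{x,y}\Phi_{xy}\langle a_x,b_y\rangle\le m\,\|\Phi\|$. Hence the quantum bias equals the classical bias: XOR games with such game matrices (in particular, all NLC games) have no quantum advantage. -/

import Mathlib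

open Matrix Finset

lemma gram_nonneg' {m : ℕ} {P : Matrix (Fin m) (Fin m) ℝ} (hP : P.PosSemidef)
    {E : Type} [NormedAddCommGroup E] [InnerProductSpace ℝ E] (b : Fin m → E) :
    0 ≤ ∑ y, ∑ y', P y y' * inner ℝ (b y) (b y') := by
  obtain ⟨R, hRsa, -, hRR⟩ := by
    open scoped MatrixOrder in
    exact CFC.exists_sqrt_of_isSelfAdjoint_of_quasispectrumRestricts hP.isHermitian
      (QuasispectrumRestricts.nnreal_of_nonneg hP.nonneg)
  have hsymm : ∀ y z, R y z = R z y := fun y z => by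
    have := (show R.IsHermitian from hRsa).apply y z
    simpa using this.symm
  have key : ∀ z : Fin m, (0:ℝ) ≤ ∑ y, ∑ y', R z y * R z y' * inner ℝ (b y) (b y') := by
    intro z
    have : ∑ y, ∑ y', R z y * R z y' * (inner ℝ (b y) (b y') : ℝ)
        = inner ℝ (∑ y, R z y • b y) (∑ y', R z y' • b y') := by
      rw [sum_inner]
      refine Finset.sum_congr rfl fun y _ => ?_
      rw [real_inner_smul_left, inner_sum, Finset.mul_sum]
      refine Finset.sum_congr rfl fun y' _ => ?_
      rw [real_inner_smul_right]; ring
    rw [this]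
    exact real_inner_self_nonneg
  calc (0:ℝ) ≤ ∑ z, ∑ y, ∑ y', R z y * R z y' * inner ℝ (b y) (b y') :=
        Finset.sum_nonneg fun z _ => key z
    _ = ∑ y, ∑ y', P y y' * inner ℝ (b y) (b y') := by
        rw [Finset.sum_comm]
        refine Finset.sum_congr rfl fun y _ => ?_
        rw [Finset.sum_comm]
        refine Finset.sum_congr rfl fun y' _ => ?_
        rw [← hRR, Matrix.mul_apply, Finset.sum_mul]
        refine Finset.sum_congr rfl fun z _ => ?_
        rw [hsymm y z]

lemma mulVec_sq_sum_le' {m : ℕ} (Φ : Matrix (Fin m) (Fin m) ℝ) (v : Fin m → ℝ) :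
    ∑ x, (Φ.mulVec v x)^2 ≤ ‖Matrix.toEuclideanCLM (𝕜 := ℝ) Φ‖^2 * ∑ x, (v x)^2 := by
  set N := ‖Matrix.toEuclideanCLM (𝕜 := ℝ) Φ‖ with hN
  have h := (Matrix.toEuclideanCLM (𝕜 := ℝ) Φ).le_opNorm ((WithLp.equiv 2 (Fin m → ℝ)).symm v)
  change ‖(WithLp.equiv 2 (Fin m → ℝ)).symm (Φ.mulVec v)‖ ≤ _ at h
  have e1 : ‖(WithLp.equiv 2 (Fin m → ℝ)).symm (Φ.mulVec v)‖
      = Real.sqrt (∑ x, (Φ.mulVec v x)^2) := by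
    rw [EuclideanSpace.norm_eq]
    congr 1
    refine Finset.sum_congr rfl fun x _ => ?_
    simp [Real.norm_eq_abs, sq_abs]
  have e2 : ‖(WithLp.equiv 2 (Fin m → ℝ)).symm v‖ = Real.sqrt (∑ x, (v x)^2) := by
    rw [EuclideanSpace.norm_eq]
    congr 1
    refine Finset.sum_congr rfl fun x _ => ?_
    simp [Real.norm_eq_abs, sq_abs]
  rw [e1, e2] at h
  have h1 : (0:ℝ) ≤ ∑ x, (Φ.mulVec v x)^2 := Finset.sum_nonneg fun x _ => sq_nonneg _
  have h2 : (0:ℝ) ≤ ∑ x, (v x)^2 := Finset.sum_nonneg fun x _ => sq_nonneg _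
  nlinarith [Real.sq_sqrt h1, Real.sq_sqrt h2, Real.sqrt_nonneg (∑ x, (Φ.mulVec v x)^2),
    Real.sqrt_nonneg (∑ x, (v x)^2), norm_nonneg (Matrix.toEuclideanCLM (𝕜 := ℝ) Φ)]

lemma quantum_bound' {m : ℕ} (Φ : Matrix (Fin m) (Fin m) ℝ)
    {E : Type} [NormedAddCommGroup E] [InnerProductSpace ℝ E]
    (a b : Fin m → E) (ha : ∀ x, ‖a x‖ = 1) (hb : ∀ y, ‖b y‖ = 1) :
    (∑ x, ∑ y, Φ x y * inner ℝ (a x) (b y))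
      ≤ (m : ℝ) * ‖Matrix.toEuclideanCLM (𝕜 := ℝ) Φ‖ := by
  set N := ‖Matrix.toEuclideanCLM (𝕜 := ℝ) Φ‖ with hN
  have hN0 : 0 ≤ N := norm_nonneg _
  set c : Fin m → E := fun x => ∑ y, Φ x y • b y with hc
  -- Step 1
  have step1 : (∑ x, ∑ y, Φ x y * (inner ℝ (a x) (b y) : ℝ)) ≤ ∑ x, ‖c x‖ := by
    refine Finset.sum_le_sum fun x _ => ?_
    have : ∑ y, Φ x y * (inner ℝ (a x) (b y) : ℝ) = inner ℝ (a x) (c x) := by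
      rw [hc]; simp only [inner_sum, real_inner_smul_right]
    rw [this]
    calc (inner ℝ (a x) (c x) : ℝ) ≤ ‖a x‖ * ‖c x‖ := real_inner_le_norm _ _
      _ = ‖c x‖ := by rw [ha x, one_mul]
  -- Step 2 (Cauchy-Schwarz on the sum)
  have step2 : (∑ x, ‖c x‖)^2 ≤ (m:ℝ) * ∑ x, ‖c x‖^2 := by
    have := sq_sum_le_card_mul_sum_sq (s := (Finset.univ : Finset (Fin m)))
      (f := fun x => ‖c x‖)
    simpa using this
  -- Step 3
  have step3 : ∑ x, ‖c x‖^2 = ∑ y, ∑ y', (Φᵀ * Φ) y y' * inner ℝ (b y) (b y') := by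
    have e : ∀ x, ‖c x‖^2 = ∑ y, ∑ y', Φ x y * Φ x y' * (inner ℝ (b y) (b y') : ℝ) := by
      intro x
      rw [← real_inner_self_eq_norm_sq, hc]
      simp only
      rw [sum_inner]
      refine Finset.sum_congr rfl fun y _ => ?_
      rw [real_inner_smul_left, inner_sum, Finset.mul_sum]
      refine Finset.sum_congr rfl fun y' _ => ?_
      rw [real_inner_smul_right]; ring
    simp_rw [e]
    rw [Finset.sum_comm]
    refine Finset.sum_congr rfl fun y _ => ?_
    rw [Finset.sum_comm]
    refine Finset.sum_congr rfl fun y' _ => ?_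
    rw [Matrix.mul_apply, Finset.sum_mul]
    refine Finset.sum_congr rfl fun x _ => ?_
    rw [Matrix.transpose_apply]
  -- Step 4
  have hQ : Matrix.PosSemidef ((N^2) • (1 : Matrix (Fin m) (Fin m) ℝ) - Φᵀ * Φ) := by
    refine Matrix.PosSemidef.of_dotProduct_mulVec_nonneg ?_ ?_
    · refine Matrix.IsHermitian.sub ?_ (Matrix.isHermitian_conjTranspose_mul_self Φ)
      ext i j
      by_cases h : i = j
      · subst h; simp [Matrix.one_apply]
      · simp [Matrix.one_apply, h, Ne.symm h]
    · intro v
      have h1 : star v ⬝ᵥ (((N^2) • (1 : Matrix (Fin m) (Fin m) ℝ) - Φᵀ * Φ) *ᵥ v)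
          = N^2 * ∑ x, (v x)^2 - ∑ x, (Φ.mulVec v x)^2 := by
        rw [Matrix.sub_mulVec, dotProduct_sub, Matrix.smul_mulVec, Matrix.one_mulVec,
          dotProduct_smul, ← Matrix.mulVec_mulVec, Matrix.dotProduct_mulVec,
          star_trivial, Matrix.vecMul_transpose]
        congr 1
        · simp [dotProduct, smul_eq_mul, sq, Finset.mul_sum]
        · simp [dotProduct, sq]
      rw [h1]
      have := mulVec_sq_sum_le' Φ v
      linarith
  have step4 : ∑ y, ∑ y', (Φᵀ * Φ) y y' * (inner ℝ (b y) (b y') : ℝ) ≤ N^2 * m := by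
    have h0 := gram_nonneg' hQ b
    have e : ∑ y, ∑ y', (((N^2) • (1 : Matrix (Fin m) (Fin m) ℝ) - Φᵀ * Φ)) y y'
          * (inner ℝ (b y) (b y') : ℝ)
        = N^2 * m - ∑ y, ∑ y', (Φᵀ * Φ) y y' * (inner ℝ (b y) (b y') : ℝ) := by
      have diag : ∀ y : Fin m, ∑ y', ((N^2) • (1 : Matrix (Fin m) (Fin m) ℝ)) y y'
          * (inner ℝ (b y) (b y') : ℝ) = N^2 := by
        intro y
        rw [Finset.sum_eq_single y]
        · have : (inner ℝ (b y) (b y) : ℝ) = 1 := by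
            rw [real_inner_self_eq_norm_sq, hb y]; norm_num
          simp [Matrix.one_apply, this, hb y]
        · intro y' _ hy'
          simp [Matrix.one_apply, Ne.symm hy']
        · simp
      simp only [Matrix.sub_apply, sub_mul, Finset.sum_sub_distrib]
      rw [sub_left_inj]
      rw [Finset.sum_congr rfl fun y _ => diag y]
      simp [mul_comm]
    rw [e] at h0
    linarith
  -- Conclusion
  have hsum_nonneg : 0 ≤ ∑ x, ‖c x‖ := Finset.sum_nonneg fun x _ => norm_nonneg _
  have hm0 : 0 ≤ (m:ℝ) := Nat.cast_nonneg m
  have : (∑ x, ‖c x‖)^2 ≤ ((m:ℝ) * N)^2 := by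
    calc (∑ x, ‖c x‖)^2 ≤ (m:ℝ) * ∑ x, ‖c x‖^2 := step2
      _ ≤ (m:ℝ) * (N^2 * m) := by
          rw [step3]; exact mul_le_mul_of_nonneg_left step4 hm0
      _ = ((m:ℝ) * N)^2 := by ring
  nlinarith [step1, this, hsum_nonneg, mul_nonneg hm0 hN0, sq_nonneg ((∑ x, ‖c x‖) + (m:ℝ)*N)]

/-- XOR games whose symmetric game matrix has a `±1` eigenvector for an
eigenvalue of maximal modulus have no quantum advantage: the classical bias
equals `m‖Φ‖` and every vector (quantum) strategy is bounded by `m‖Φ‖`. -/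
theorem stmt14 (m : ℕ) (Φ : Matrix (Fin m) (Fin m) ℝ) (hΦ : Φ.IsSymm)
    (u : Fin m → ℝ) (hu : ∀ i, u i = 1 ∨ u i = -1) (lam : ℝ)
    (heig : Φ.mulVec u = lam • u)
    (hnorm : |lam| = ‖Matrix.toEuclideanCLM (𝕜 := ℝ) Φ‖) :
    IsGreatest {v : ℝ | ∃ α β : Fin m → ℝ,
        (∀ x, α x = 1 ∨ α x = -1) ∧ (∀ y, β y = 1 ∨ β y = -1) ∧
        v = ∑ x, ∑ y, α x * Φ x y * β y}
      ((m : ℝ) * ‖Matrix.toEuclideanCLM (𝕜 := ℝ) Φ‖) ∧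
    ∀ (E : Type) [inst : NormedAddCommGroup E] [inst2 : InnerProductSpace ℝ E]
      (a b : Fin m → E), (∀ x, ‖a x‖ = 1) → (∀ y, ‖b y‖ = 1) →
      (∑ x, ∑ y, Φ x y * inner ℝ (a x) (b y)) ≤
        (m : ℝ) * ‖Matrix.toEuclideanCLM (𝕜 := ℝ) Φ‖ := by
  have hu2 : ∀ i, u i * u i = 1 := fun i => by rcases hu i with h | h <;> rw [h] <;> norm_num
  constructor
  · constructor
    · -- membership: achieved by α = sign(lam) • u, β = u
      set ε : ℝ := if 0 ≤ lam then 1 else -1 with hε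
      refine ⟨fun x => ε * u x, u, ?_, hu, ?_⟩
      · intro x
        show ε * u x = 1 ∨ ε * u x = -1
        rcases hu x with h | h <;> rw [h, hε] <;> split <;> norm_num
      · have hrow : ∀ x, ∑ y, Φ x y * u y = lam * u x := by
          intro x
          have := congrFun heig x
          simpa [Matrix.mulVec, dotProduct] using this
        have : ∑ x, ∑ y, (ε * u x) * Φ x y * u y = ε * lam * m := by
          calc ∑ x, ∑ y, (ε * u x) * Φ x y * u y
              = ∑ x, (ε * u x) * ∑ y, Φ x y * u y := by
                refine Finset.sum_congr rfl fun x _ => ?_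
                rw [Finset.mul_sum]
                exact Finset.sum_congr rfl fun y _ => by ring
            _ = ∑ x, ε * lam * (u x * u x) := by
                refine Finset.sum_congr rfl fun x _ => ?_
                rw [hrow x]; ring
            _ = ε * lam * m := by
                simp only [hu2, mul_one, Finset.sum_const, Finset.card_univ,
                  Fintype.card_fin, nsmul_eq_mul]
                ring
        rw [this]
        have : ε * lam = |lam| := by
          rw [hε]; rcases le_or_gt 0 lam with h | h
          · simp [h, abs_of_nonneg h]
          · simp [not_le.mpr h, abs_of_neg h]
        rw [this, hnorm]; ring
    · -- upper bound
      rintro v ⟨α, β, hα, hβ, rfl⟩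
      have h := quantum_bound' Φ (E := ℝ) α β
        (fun x => by rcases hα x with h | h <;> simp [h, Real.norm_eq_abs])
        (fun y => by rcases hβ y with h | h <;> simp [h, Real.norm_eq_abs])
      calc ∑ x, ∑ y, α x * Φ x y * β y
          = ∑ x, ∑ y, Φ x y * inner ℝ (α x) (β y) := by
            refine Finset.sum_congr rfl fun x _ => Finset.sum_congr rfl fun y _ => ?_
            rw [RCLike.inner_apply]
            simp [mul_comm, mul_assoc, mul_left_comm]
        _ ≤ (m : ℝ) * ‖Matrix.toEuclideanCLM (𝕜 := ℝ) Φ‖ := h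
  · intro E inst inst2 a b ha hb
    exact quantum_bound' Φ a b ha hb
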